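/- Fix reals z1, z2 with z2 < 0 < z1, nonnegative reals g11, g22, g12, and c1⁰, c2⁰ > 0 with D(c1⁰, c2⁰) < 0. Let c1 be a solution trajectory with c1(c2⁰) = c1⁰. Then there exist c2ᵃ ∈ (0, c2⁰) and c2ᵇ ∈ (c2⁰, ∞) such that D(c1(c2ᵃ), c2ᵃ) = 0 and D(c1(c2ᵇ), c2ᵇ) = 0. -/

import Mathlib

/-- The right-hand side of the trajectory ODE `dc1/dc2 = F(c1, c2)` for stationary
solutions of the PNP-steric system. -/
noncomputable def F (z1 z2 g11 g22 g12 c1 c2 : ℝ) : ℝ :=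
  (z1 * (1 / c2 + g22) - z2 * g12) / (z2 * (1 / c1 + g11) - z1 * g12)

/-- The determinant of the Hessian of the entropy-plus-steric energy density. -/
noncomputable def D (g11 g22 g12 c1 c2 : ℝ) : ℝ :=
  (1 / c1 + g11) * (1 / c2 + g22) - g12 ^ 2

set_option maxHeartbeats 1600000

/-- Lemma 2(3) of the paper: if `D < 0` at a point of a solution trajectory, then the
trajectory intersects the curve `{D = 0}` at least at two points, one on each side. -/
theorem stmt6 (z1 z2 g11 g22 g12 c10 c20 : ℝ)
    (hz2 : z2 < 0) (hz1 : 0 < z1)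
    (hg11 : 0 ≤ g11) (hg22 : 0 ≤ g22) (hg12 : 0 ≤ g12)
    (hc10 : 0 < c10) (hc20 : 0 < c20)
    (hD : D g11 g22 g12 c10 c20 < 0)
    (c1 : ℝ → ℝ)
    (h_pos : ∀ c2 : ℝ, 0 < c2 → 0 < c1 c2)
    (h_ode : ∀ c2 : ℝ, 0 < c2 → HasDerivAt c1 (F z1 z2 g11 g22 g12 (c1 c2) c2) c2)
    (h_init : c1 c20 = c10) :
    (∃ c2a : ℝ, c2a ∈ Set.Ioo (0 : ℝ) c20 ∧ D g11 g22 g12 (c1 c2a) c2a = 0) ∧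
    (∃ c2b : ℝ, c20 < c2b ∧ D g11 g22 g12 (c1 c2b) c2b = 0) := by
  have hw0 : 0 < -z2 := by linarith
  set w : ℝ := -z2 with hwdef
  -- g12 is positive
  have hg12' : 0 < g12 := by
    rcases hg12.lt_or_eq with h | h
    · exact h
    · exfalso
      rw [D, ← h] at hD
      have h1 : 0 < 1 / c10 + g11 := by positivity
      have h2 : 0 < 1 / c20 + g22 := by positivity
      nlinarith
  -- continuity of the trajectory and of D along it
  have hc1c : ∀ t : ℝ, 0 < t → ContinuousAt c1 t := fun t ht => (h_ode t ht).continuousAt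
  have hDc : ∀ t : ℝ, 0 < t → ContinuousAt (fun s => D g11 g22 g12 (c1 s) s) t := by
    intro t ht
    have h1 : ContinuousAt (fun s => 1 / c1 s + g11) t :=
      (continuousAt_const.div (hc1c t ht) (h_pos t ht).ne').add continuousAt_const
    have h2 : ContinuousAt (fun s => 1 / s + g22) t :=
      (continuousAt_const.div continuousAt_id ht.ne').add continuousAt_const
    exact (h1.mul h2).sub continuousAt_const
  -- rewriting F
  have keyF : ∀ t : ℝ, 0 < t →
      F z1 z2 g11 g22 g12 (c1 t) t
        = -((z1 * (1 / t + g22) + w * g12) / (w * (1 / c1 t + g11) + z1 * g12)) := by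
    intro t ht
    rw [F]
    have h1 : z2 * (1 / c1 t + g11) - z1 * g12 = -(w * (1 / c1 t + g11) + z1 * g12) := by
      rw [hwdef]; ring
    have h2 : z1 * (1 / t + g22) - z2 * g12 = z1 * (1 / t + g22) + w * g12 := by
      rw [hwdef]; ring
    rw [h1, h2, div_neg]
  set A : ℝ := 1 / g12 with hAdef
  set B : ℝ := g22 / g12 + w / z1 with hBdef
  have hA : 0 < A := by positivity
  have hB : 0 ≤ B := by
    rw [hBdef]; positivity
  -- lower bound on F, valid everywhere
  have keyL : ∀ t : ℝ, 0 < t → -(A * t⁻¹ + B * 1) ≤ F z1 z2 g11 g22 g12 (c1 t) t := by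
    intro t ht
    rw [keyF t ht]
    have hct := h_pos t ht
    have ha : 0 < 1 / c1 t + g11 := by positivity
    have hb : 0 < 1 / t + g22 := by positivity
    have hK : 0 < w * (1 / c1 t + g11) + z1 * g12 :=
      add_pos_of_nonneg_of_pos (le_of_lt (mul_pos hw0 ha)) (mul_pos hz1 hg12')
    have hN : 0 ≤ z1 * (1 / t + g22) + w * g12 := by
      nlinarith [mul_pos hz1 hb, mul_pos hw0 hg12']
    apply neg_le_neg
    have hstep : (z1 * (1 / t + g22) + w * g12) / (w * (1 / c1 t + g11) + z1 * g12)
        ≤ (z1 * (1 / t + g22) + w * g12) / (z1 * g12) := by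
      gcongr
      nlinarith [mul_pos hw0 ha, mul_pos hz1 hg12']
    refine hstep.trans (le_of_eq ?_)
    rw [hAdef, hBdef]
    field_simp
    ring
  -- upper bound on F where D < 0
  have keyR : ∀ t : ℝ, 0 < t → D g11 g22 g12 (c1 t) t < 0 →
      F z1 z2 g11 g22 g12 (c1 t) t ≤ -(A * (w * g12 * 1 / (w * g12 * t + z1))) := by
    intro t ht hDt
    rw [keyF t ht]
    have hct := h_pos t ht
    have ha : 0 < 1 / c1 t + g11 := by positivity
    have hb : 0 < 1 / t + g22 := by positivity
    have hK : 0 < w * (1 / c1 t + g11) + z1 * g12 :=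
      add_pos_of_nonneg_of_pos (le_of_lt (mul_pos hw0 ha)) (mul_pos hz1 hg12')
    have hP : 0 < w * g12 * t + z1 :=
      add_pos_of_nonneg_of_pos (by positivity) hz1
    rw [D] at hDt
    have hab : (1 / c1 t + g11) * (1 / t + g22) < g12 ^ 2 := by linarith
    apply neg_le_neg
    have hAw : A * (w * g12 * 1 / (w * g12 * t + z1)) = w / (w * g12 * t + z1) := by
      rw [hAdef]; field_simp
    rw [hAw, div_le_div_iff₀ hP hK]
    -- w * K ≤ N * P
    have hbt : 1 ≤ (1 / t + g22) * t := by
      rw [add_mul, one_div, inv_mul_cancel₀ ht.ne']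
      nlinarith
    have h3 : (1 / c1 t + g11) ≤ (1 / c1 t + g11) * ((1 / t + g22) * t) := by
      nlinarith
    have h4 : (1 / c1 t + g11) * ((1 / t + g22) * t) < g12 ^ 2 * t := by
      calc (1 / c1 t + g11) * ((1 / t + g22) * t)
          = ((1 / c1 t + g11) * (1 / t + g22)) * t := by ring
        _ < g12 ^ 2 * t := by exact mul_lt_mul_of_pos_right hab ht
    have h5 : (1 / c1 t + g11) < g12 ^ 2 * t := lt_of_le_of_lt h3 h4
    have t1 : 0 ≤ z1 * (1 / t + g22) * (w * g12 * t + z1) :=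
      le_of_lt (mul_pos (mul_pos hz1 hb) hP)
    have t3 : w * w * (1 / c1 t + g11) < w * w * (g12 ^ 2 * t) :=
      mul_lt_mul_of_pos_left h5 (mul_pos hw0 hw0)
    have t4 : w * (w * (1 / c1 t + g11) + z1 * g12)
        = w * w * (1 / c1 t + g11) + w * (z1 * g12) := by ring
    have t5 : (z1 * (1 / t + g22) + w * g12) * (w * g12 * t + z1)
        = z1 * (1 / t + g22) * (w * g12 * t + z1) + w * w * (g12 ^ 2 * t) + w * (z1 * g12) := by
      ring
    rw [t4, t5]
    linarith [t1, t3]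
  -- monotonicity of c1 plus logarithmic correction (left side)
  have hchi : ∀ s : ℝ, 0 < s → s ≤ c20 →
      c1 s + A * Real.log s + B * s ≤ c1 c20 + A * Real.log c20 + B * c20 := by
    intro s hs hsle
    have hder : ∀ t : ℝ, 0 < t → HasDerivAt (fun u => c1 u + A * Real.log u + B * u)
        (F z1 z2 g11 g22 g12 (c1 t) t + A * t⁻¹ + B * 1) t := by
      intro t ht
      exact ((h_ode t ht).add ((Real.hasDerivAt_log ht.ne').const_mul A)).add
        ((hasDerivAt_id t).const_mul B)
    have hmono : MonotoneOn (fun u => c1 u + A * Real.log u + B * u) (Set.Icc s c20) := by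
      apply monotoneOn_of_deriv_nonneg (convex_Icc s c20)
      · intro t ht
        exact ((hder t (lt_of_lt_of_le hs ht.1)).continuousAt).continuousWithinAt
      · intro t ht
        rw [interior_Icc] at ht
        exact ((hder t (lt_of_lt_of_le hs ht.1.le)).differentiableAt).differentiableWithinAt
      · intro t ht
        rw [interior_Icc] at ht
        have ht0 : 0 < t := lt_of_lt_of_le hs ht.1.le
        rw [(hder t ht0).deriv]
        have := keyL t ht0
        linarith
    exact hmono (Set.mem_Icc.mpr ⟨le_rfl, hsle⟩) (Set.mem_Icc.mpr ⟨hsle, le_rfl⟩) hsle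
  constructor
  · -- LEFT SIDE
    by_contra hcon
    push_neg at hcon
    -- D is negative along the trajectory on (0, c20]
    have hDneg : ∀ s : ℝ, 0 < s → s < c20 → D g11 g22 g12 (c1 s) s < 0 := by
      intro s hs hslt
      by_contra hge
      push_neg at hge
      have hpos : 0 < D g11 g22 g12 (c1 s) s :=
        lt_of_le_of_ne hge (Ne.symm (hcon s ⟨hs, hslt⟩))
      have hcont' : ContinuousOn (fun u => D g11 g22 g12 (c1 u) u) (Set.Icc s c20) :=
        fun t ht => (hDc t (lt_of_lt_of_le hs ht.1)).continuousWithinAt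
      have hsub := intermediate_value_Icc' hslt.le hcont'
      have h0 : (0 : ℝ) ∈ Set.Icc (D g11 g22 g12 (c1 c20) c20) (D g11 g22 g12 (c1 s) s) := by
        constructor
        · rw [h_init]; exact hD.le
        · exact hpos.le
      obtain ⟨u, hu, hu0⟩ := hsub h0
      have hune : u ≠ c20 := by
        intro h
        rw [h] at hu0
        simp only [h_init] at hu0
        exact absurd hu0 hD.ne
      exact hcon u ⟨lt_of_lt_of_le hs hu.1, lt_of_le_of_ne hu.2 hune⟩ hu0
    -- quantitative contradiction
    set C0 : ℝ := c10 + B * c20 with hC0def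
    have hC0 : 0 < C0 := by
      rw [hC0def]; nlinarith
    set M : ℝ := c20 * C0 + 4 * A * c20 with hMdef
    have hM : 0 < M := by
      rw [hMdef]; nlinarith
    set x : ℝ := max 1 (2 * g12 ^ 2 * M) with hxdef
    have hx1 : (1 : ℝ) ≤ x := le_max_left _ _
    have hx0 : 0 < x := lt_of_lt_of_le one_pos hx1
    have hx2 : 2 * g12 ^ 2 * M ≤ x := le_max_right _ _
    set s : ℝ := c20 * Real.exp (-x) with hsdef
    have hs0 : 0 < s := mul_pos hc20 (Real.exp_pos _)
    have hslt : s < c20 := by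
      have h1 : Real.exp (-x) < 1 := Real.exp_lt_one_iff.mpr (by linarith)
      rw [hsdef]
      nlinarith
    -- bound on c1 s
    have h1 := hchi s hs0 hslt.le
    rw [h_init] at h1
    have hlogs : Real.log s = Real.log c20 - x := by
      rw [hsdef, Real.log_mul hc20.ne' (Real.exp_pos _).ne', Real.log_exp]; ring
    have h2 : c1 s ≤ C0 + A * x := by
      rw [hlogs] at h1
      have hBs : 0 ≤ B * s := mul_nonneg hB hs0.le
      rw [hC0def]
      nlinarith
    -- lower bound on c1 s from D < 0
    have h3 := hDneg s hs0 hslt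
    rw [D] at h3
    have hcs := h_pos s hs0
    have h4 : 1 < g12 ^ 2 * (s * c1 s) := by
      have e1 : 0 < 1 / c1 s := by positivity
      have e2 : 0 < 1 / s := by positivity
      have h5 : (1 / c1 s) * (1 / s) < g12 ^ 2 := by nlinarith
      have h6 : (1 / c1 s) * (1 / s) * (s * c1 s) < g12 ^ 2 * (s * c1 s) :=
        mul_lt_mul_of_pos_right h5 (by positivity)
      calc (1 : ℝ) = (1 / c1 s) * (1 / s) * (s * c1 s) := by
            field_simp
        _ < g12 ^ 2 * (s * c1 s) := h6
    -- exponential bounds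
    have hexp1 : Real.exp (-x) ≤ 1 / x := by
      rw [Real.exp_neg]
      have hxe : x ≤ Real.exp x := by linarith [Real.add_one_le_exp x]
      rw [one_div]
      exact inv_anti₀ hx0 hxe
    have hexp2 : x * Real.exp (-x) ≤ 4 / x := by
      have hq : x ^ 2 / 4 ≤ Real.exp x := by
        have h7 := Real.add_one_le_exp (x / 2)
        have h8 : (x / 2 + 1) * (x / 2 + 1) ≤ Real.exp (x / 2) * Real.exp (x / 2) :=
          mul_le_mul h7 h7 (by linarith) (Real.exp_pos _).le
        have h9 : Real.exp (x / 2) * Real.exp (x / 2) = Real.exp x := by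
          rw [← Real.exp_add]; ring_nf
        nlinarith
      rw [Real.exp_neg, le_div_iff₀ hx0]
      have h7 : x ^ 2 ≤ 4 * Real.exp x := by linarith
      calc x * (Real.exp x)⁻¹ * x = x ^ 2 * (Real.exp x)⁻¹ := by ring
        _ ≤ (4 * Real.exp x) * (Real.exp x)⁻¹ :=
            mul_le_mul_of_nonneg_right h7 (by positivity)
        _ = 4 := by field_simp
    -- combine
    have h8 : g12 ^ 2 * (s * c1 s) ≤ g12 ^ 2 * (s * (C0 + A * x)) := by
      apply mul_le_mul_of_nonneg_left _ (by positivity)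
      exact mul_le_mul_of_nonneg_left h2 hs0.le
    have h9 : g12 ^ 2 * (s * (C0 + A * x)) ≤ 1 / 2 := by
      have e1 : s * (C0 + A * x) = c20 * (C0 * Real.exp (-x) + A * (x * Real.exp (-x))) := by
        rw [hsdef]; ring
      rw [e1]
      have e2 : C0 * Real.exp (-x) ≤ C0 * (1 / x) := mul_le_mul_of_nonneg_left hexp1 hC0.le
      have e3 : A * (x * Real.exp (-x)) ≤ A * (4 / x) := mul_le_mul_of_nonneg_left hexp2 hA.le
      have e4 : g12 ^ 2 * (c20 * (C0 * (1 / x) + A * (4 / x))) ≤ 1 / 2 := by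
        have e5 : c20 * (C0 * (1 / x) + A * (4 / x)) = M / x := by
          rw [hMdef]; field_simp
        rw [e5, ← mul_div_assoc, div_le_iff₀ hx0]
        nlinarith
      refine le_trans ?_ e4
      apply mul_le_mul_of_nonneg_left _ (by positivity)
      apply mul_le_mul_of_nonneg_left _ hc20.le
      linarith
    exact absurd (h4.trans_le (h8.trans h9)) (by norm_num)
  · -- RIGHT SIDE
    by_contra hcon
    push_neg at hcon
    -- D is negative along the trajectory on [c20, ∞)
    have hDneg : ∀ t : ℝ, c20 ≤ t → D g11 g22 g12 (c1 t) t < 0 := by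
      intro t ht
      rcases ht.eq_or_lt with h | hlt
      · rw [← h, h_init]; exact hD
      by_contra hge
      push_neg at hge
      have hpos : 0 < D g11 g22 g12 (c1 t) t :=
        lt_of_le_of_ne hge (Ne.symm (hcon t hlt))
      have hcont' : ContinuousOn (fun u => D g11 g22 g12 (c1 u) u) (Set.Icc c20 t) :=
        fun u hu => (hDc u (lt_of_lt_of_le hc20 hu.1)).continuousWithinAt
      have hsub := intermediate_value_Icc hlt.le hcont'
      have h0 : (0 : ℝ) ∈ Set.Icc (D g11 g22 g12 (c1 c20) c20) (D g11 g22 g12 (c1 t) t) := by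
        constructor
        · rw [h_init]; exact hD.le
        · exact hpos.le
      obtain ⟨u, hu, hu0⟩ := hsub h0
      have hune : u ≠ c20 := by
        intro h
        rw [h] at hu0
        simp only [h_init] at hu0
        exact absurd hu0 hD.ne
      exact hcon u (lt_of_le_of_ne hu.1 (Ne.symm hune)) hu0
    -- the comparison function φ is antitone on [c20, T]
    set P0 : ℝ := w * g12 * c20 + z1 with hP0def
    have hP0 : 0 < P0 := by
      rw [hP0def]
      exact add_pos_of_nonneg_of_pos (by positivity) hz1
    set T : ℝ := max (c20 + 1) (Real.exp (g12 * c10) * P0 / (w * g12)) with hTdef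
    have hT : c20 < T := lt_of_lt_of_le (by linarith) (le_max_left _ _)
    have hT0 : 0 < T := lt_trans hc20 hT
    have hderφ : ∀ t : ℝ, 0 < t →
        HasDerivAt (fun u => c1 u + A * Real.log (w * g12 * u + z1))
          (F z1 z2 g11 g22 g12 (c1 t) t + A * (w * g12 * 1 / (w * g12 * t + z1))) t := by
      intro t ht
      have hPt : w * g12 * t + z1 ≠ 0 := by
        have : 0 < w * g12 * t + z1 := add_pos_of_nonneg_of_pos (by positivity) hz1
        exact this.ne'
      exact (h_ode t ht).add
        (((((hasDerivAt_id t).const_mul (w * g12)).add_const z1).log hPt).const_mul A)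
    have hanti : AntitoneOn (fun u => c1 u + A * Real.log (w * g12 * u + z1))
        (Set.Icc c20 T) := by
      apply antitoneOn_of_deriv_nonpos (convex_Icc c20 T)
      · intro t ht
        exact ((hderφ t (lt_of_lt_of_le hc20 ht.1)).continuousAt).continuousWithinAt
      · intro t ht
        rw [interior_Icc] at ht
        exact ((hderφ t (lt_of_lt_of_le hc20 ht.1.le)).differentiableAt).differentiableWithinAt
      · intro t ht
        rw [interior_Icc] at ht
        have ht0 : 0 < t := lt_of_lt_of_le hc20 ht.1.le
        rw [(hderφ t ht0).deriv]
        have := keyR t ht0 (hDneg t ht.1.le)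
        linarith
    have h1 := hanti (Set.mem_Icc.mpr ⟨le_rfl, hT.le⟩) (Set.mem_Icc.mpr ⟨hT.le, le_rfl⟩) hT.le
    simp only [h_init] at h1
    -- log lower bound at T
    have hwg : 0 < w * g12 := mul_pos hw0 hg12'
    have hTge : Real.exp (g12 * c10) * P0 / (w * g12) ≤ T := le_max_right _ _
    have harg : Real.exp (g12 * c10) * P0 ≤ w * g12 * T + z1 := by
      have h2 : Real.exp (g12 * c10) * P0 ≤ w * g12 * T :=
        (div_le_iff₀' hwg).mp hTge
      linarith
    have hlog : g12 * c10 + Real.log P0 ≤ Real.log (w * g12 * T + z1) := by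
      have h2 : Real.log (Real.exp (g12 * c10) * P0) = g12 * c10 + Real.log P0 := by
        rw [Real.log_mul (Real.exp_pos _).ne' hP0.ne', Real.log_exp]
      rw [← h2]
      exact Real.log_le_log (by positivity) harg
    have h3 : A * (g12 * c10 + Real.log P0) ≤ A * Real.log (w * g12 * T + z1) :=
      mul_le_mul_of_nonneg_left hlog hA.le
    have hAg : A * (g12 * c10) = c10 := by
      rw [hAdef]; field_simp
    have h4 : c1 T ≤ 0 := by
      have e1 : A * (g12 * c10 + Real.log P0) = c10 + A * Real.log P0 := by
        rw [mul_add, hAg]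
      rw [e1] at h3
      -- h1 : c1 T + A * log(w g12 T + z1) ≤ c10 + A * log P0  (note P0 = w g12 c20 + z1)
      rw [hP0def] at h3
      linarith
    exact absurd h4 (h_pos T hT0).not_ge
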